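/- Let X and Y be Polish spaces with their Borel σ-algebras, d_X : X × X → ℝ≥0∞ and d_Y : Y × Y → ℝ≥0∞ Borel measurable cost functions, and T : X → Y a Borel measurable map that is an isometry for these costs: d_Y(T x, T x') = d_X(x, x') for all x, x' ∈ X. Then the pushforward preserves Wasserstein cost: W(d_Y)(T_# a, T_# b) = W(d_X)(a, b) for all Borel probability measures a, b on X. -/

import Mathlib

open MeasureTheory
open scoped ENNReal

/-- The Wasserstein (Kantorovich) cost: infimum of the transport cost over all
couplings of `μ` and `ν`. -/
noncomputable def wassersteinCost {Z : Type*} [MeasurableSpace Z]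
    (c : Z × Z → ℝ≥0∞) (μ ν : Measure Z) : ℝ≥0∞ :=
  ⨅ (S : Measure (Z × Z)) (_ : IsProbabilityMeasure S)
    (_ : S.map Prod.fst = μ) (_ : S.map Prod.snd = ν), ∫⁻ p, c p ∂S

lemma wassersteinCost_le_coupling {Z : Type*} [MeasurableSpace Z]
    (c : Z × Z → ℝ≥0∞) {μ ν : Measure Z} {S : Measure (Z × Z)}
    (h1 : IsProbabilityMeasure S) (h2 : S.map Prod.fst = μ) (h3 : S.map Prod.snd = ν) :
    wassersteinCost c μ ν ≤ ∫⁻ p, c p ∂S :=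
  iInf_le_of_le S (iInf_le_of_le h1 (iInf_le_of_le h2 (iInf_le_of_le h3 le_rfl)))

lemma le_wassersteinCost {Z : Type*} [MeasurableSpace Z]
    (c : Z × Z → ℝ≥0∞) {μ ν : Measure Z} {w : ℝ≥0∞}
    (h : ∀ S : Measure (Z × Z), IsProbabilityMeasure S → S.map Prod.fst = μ →
      S.map Prod.snd = ν → w ≤ ∫⁻ p, c p ∂S) :
    w ≤ wassersteinCost c μ ν :=
  le_iInf fun S => le_iInf fun h1 => le_iInf fun h2 => le_iInf fun h3 => h S h1 h2 h3

/-- The conditional kernel of `μ.map (fun x => (T x, x))` is a.e. supported on the fiber. -/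
lemma condKernel_fiber {X Y : Type*}
    [MeasurableSpace X] [StandardBorelSpace X] [Nonempty X]
    [TopologicalSpace Y] [T2Space Y] [SecondCountableTopology Y]
    [MeasurableSpace Y] [OpensMeasurableSpace Y]
    (T : X → Y) (hT : Measurable T) (μ : Measure X) [IsProbabilityMeasure μ] :
    ∀ᵐ y ∂(μ.map T), ∀ᵐ x ∂((μ.map (fun x => (T x, x))).condKernel y), T x = y := by
  set ρ : Measure (Y × X) := μ.map (fun x => (T x, x)) with hρ
  have hmeas : Measurable (fun x => (T x, x)) := hT.prodMk measurable_id
  have hρfst : ρ.fst = μ.map T := by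
    rw [hρ, Measure.fst, Measure.map_map measurable_fst hmeas]
    rfl
  have hset : MeasurableSet {p : Y × X | p.1 = T p.2} := by
    have : {p : Y × X | p.1 = T p.2} =
        (fun p : Y × X => (p.1, T p.2)) ⁻¹' Set.diagonal Y := by
      ext p; simp [Set.diagonal]
    rw [this]
    exact (measurable_fst.prodMk (hT.comp measurable_snd))
      isClosed_diagonal.measurableSet
  have hae : ∀ᵐ p ∂ρ, p.1 = T p.2 := by
    rw [ae_iff]
    have : {p : Y × X | ¬ p.1 = T p.2} = {p : Y × X | p.1 = T p.2}ᶜ := rfl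
    rw [this, hρ, Measure.map_apply hmeas hset.compl]
    have h0 : (fun x => (T x, x)) ⁻¹' {p : Y × X | p.1 = T p.2}ᶜ = ∅ := by ext x; simp
    rw [h0]; exact measure_empty
  have : IsProbabilityMeasure ρ := by
    rw [hρ]; exact Measure.isProbabilityMeasure_map hmeas.aemeasurable
  rw [← Measure.disintegrate ρ ρ.condKernel] at hae
  have h2 := Measure.ae_ae_of_ae_compProd hae
  rw [hρfst] at h2
  filter_upwards [h2] with y hy
  filter_upwards [hy] with x hx
  exact hx.symm

/-- pushing forward along a measurable map between Polish spaces that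
is an isometry for the cost functions preserves the Wasserstein cost. -/
theorem pushforward_isometry_wasserstein
    {X Y : Type*} [TopologicalSpace X] [PolishSpace X] [MeasurableSpace X] [BorelSpace X]
    [TopologicalSpace Y] [PolishSpace Y] [MeasurableSpace Y] [BorelSpace Y]
    (dX : X × X → ℝ≥0∞) (hdX : Measurable dX)
    (dY : Y × Y → ℝ≥0∞) (hdY : Measurable dY)
    (T : X → Y) (hT : Measurable T)
    (hT_iso : ∀ x x', dY (T x, T x') = dX (x, x'))
    (a b : Measure X) [IsProbabilityMeasure a] [IsProbabilityMeasure b] :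
    wassersteinCost dY (a.map T) (b.map T) = wassersteinCost dX a b := by
  have hX : Nonempty X := by
    by_contra h
    rw [not_nonempty_iff] at h
    have := measure_univ (μ := a)
    simp [Set.univ_eq_empty_iff.2 h] at this
  refine le_antisymm ?_ ?_
  · -- easy direction: push a coupling forward
    refine le_wassersteinCost _ fun S hS h1 h2 => ?_
    have hTT : Measurable (Prod.map T T) := hT.prodMap hT
    have hfst : (S.map (Prod.map T T)).map Prod.fst = a.map T := by
      rw [Measure.map_map measurable_fst hTT, ← h1,
        Measure.map_map hT measurable_fst]
      rfl
    have hsnd : (S.map (Prod.map T T)).map Prod.snd = b.map T := by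
      rw [Measure.map_map measurable_snd hTT, ← h2,
        Measure.map_map hT measurable_snd]
      rfl
    refine le_trans (wassersteinCost_le_coupling dY
      (Measure.isProbabilityMeasure_map hTT.aemeasurable) hfst hsnd) ?_
    rw [lintegral_map hdY hTT]
    refine le_of_eq (lintegral_congr fun p => ?_)
    exact hT_iso p.1 p.2
  · -- hard direction: pull a coupling of `T_# a, T_# b` back via disintegration
    refine le_wassersteinCost _ fun Sig hSig h1 h2 => ?_
    set ρa : Measure (Y × X) := a.map (fun x => (T x, x)) with hρa
    set ρb : Measure (Y × X) := b.map (fun x => (T x, x)) with hρb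
    have hma : Measurable (fun x : X => (T x, x)) := hT.prodMk measurable_id
    have : IsProbabilityMeasure ρa := Measure.isProbabilityMeasure_map hma.aemeasurable
    have : IsProbabilityMeasure ρb := Measure.isProbabilityMeasure_map hma.aemeasurable
    have hρafst : ρa.fst = a.map T := by
      rw [hρa, Measure.fst, Measure.map_map measurable_fst hma]; rfl
    have hρbfst : ρb.fst = b.map T := by
      rw [hρb, Measure.fst, Measure.map_map measurable_fst hma]; rfl
    have hρasnd : ρa.snd = a := by
      rw [hρa, Measure.snd, Measure.map_map measurable_snd hma]
      simp [Function.comp_def]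
    have hρbsnd : ρb.snd = b := by
      rw [hρb, Measure.snd, Measure.map_map measurable_snd hma]
      simp [Function.comp_def]
    set κa := ρa.condKernel with hκa
    set κb := ρb.condKernel with hκb
    -- the pulled-back coupling as a kernel from Y × Y to X × X
    set K : ProbabilityTheory.Kernel (Y × Y) (X × X) :=
      (κa.comap Prod.fst measurable_fst).prod (κb.comap Prod.snd measurable_snd) with hK
    have hKapp : ∀ q : Y × Y, K q = (κa q.1).prod (κb q.2) := by
      intro q
      rw [hK, ProbabilityTheory.Kernel.prod_apply,
        ProbabilityTheory.Kernel.comap_apply, ProbabilityTheory.Kernel.comap_apply]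
    have hKmarkov : ProbabilityTheory.IsMarkovKernel K := by
      constructor
      intro q
      rw [hKapp q]
      infer_instance
    set S : Measure (X × X) := Sig.bind K with hS'
    have hKm : Measurable (K : Y × Y → Measure (X × X)) := K.measurable
    -- S is a probability measure
    have hSprob : IsProbabilityMeasure S := by
      constructor
      rw [hS', Measure.bind_apply MeasurableSet.univ hKm.aemeasurable]
      simp
    -- marginal computation via compProd_apply
    have hbindA : ∀ s : Set X, MeasurableSet s →
        ∫⁻ y, κa y s ∂ρa.fst = a s := by
      intro s hs
      have h := congrArg (fun m : Measure (Y × X) => m (Prod.snd ⁻¹' s))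
        (Measure.disintegrate ρa ρa.condKernel)
      rw [Measure.compProd_apply (measurable_snd hs)] at h
      have h2 : ρa (Prod.snd ⁻¹' s) = a s := by
        rw [← hρasnd, Measure.snd, Measure.map_apply measurable_snd hs]
      rw [← h2, ← h]
      rfl
    have hbindB : ∀ s : Set X, MeasurableSet s →
        ∫⁻ y, κb y s ∂ρb.fst = b s := by
      intro s hs
      have h := congrArg (fun m : Measure (Y × X) => m (Prod.snd ⁻¹' s))
        (Measure.disintegrate ρb ρb.condKernel)
      rw [Measure.compProd_apply (measurable_snd hs)] at h
      have h2 : ρb (Prod.snd ⁻¹' s) = b s := by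
        rw [← hρbsnd, Measure.snd, Measure.map_apply measurable_snd hs]
      rw [← h2, ← h]
      rfl
    have hfst : S.map Prod.fst = a := by
      ext s hs
      rw [Measure.map_apply measurable_fst hs, hS',
        Measure.bind_apply (measurable_fst hs) hKm.aemeasurable]
      have : ∀ q : Y × Y, K q (Prod.fst ⁻¹' s) = κa q.1 s := by
        intro q
        rw [hKapp q]
        have : Prod.fst ⁻¹' s = s ×ˢ (Set.univ : Set X) := by ext p; simp
        rw [this, Measure.prod_prod]
        simp
      simp_rw [this]
      have := hbindA s hs
      rw [hρafst, ← h1, lintegral_map (κa.measurable_coe hs) measurable_fst] at this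
      exact this
    have hsnd : S.map Prod.snd = b := by
      ext s hs
      rw [Measure.map_apply measurable_snd hs, hS',
        Measure.bind_apply (measurable_snd hs) hKm.aemeasurable]
      have : ∀ q : Y × Y, K q (Prod.snd ⁻¹' s) = κb q.2 s := by
        intro q
        rw [hKapp q]
        have : Prod.snd ⁻¹' s = (Set.univ : Set X) ×ˢ s := by ext p; simp
        rw [this, Measure.prod_prod]
        simp
      simp_rw [this]
      have := hbindB s hs
      rw [hρbfst, ← h2, lintegral_map (κb.measurable_coe hs) measurable_snd] at this
      exact this
    refine le_trans (wassersteinCost_le_coupling dX hSprob hfst hsnd) ?_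
    -- cost of S equals cost of Sig
    rw [hS', Measure.lintegral_bind hKm.aemeasurable hdX.aemeasurable]
    -- a.e. fiber support facts transported to Sig
    have hfibA : ∀ᵐ q ∂Sig, ∀ᵐ x ∂(κa q.1), T x = q.1 := by
      have := condKernel_fiber T hT a
      rw [← h1] at this
      exact ae_of_ae_map measurable_fst.aemeasurable this
    have hfibB : ∀ᵐ q ∂Sig, ∀ᵐ x ∂(κb q.2), T x = q.2 := by
      have := condKernel_fiber T hT b
      rw [← h2] at this
      exact ae_of_ae_map measurable_snd.aemeasurable this
    refine le_of_eq (lintegral_congr_ae ?_)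
    filter_upwards [hfibA, hfibB] with q hqa hqb
    rw [hKapp q, lintegral_prod _ hdX.aemeasurable]
    calc ∫⁻ x, ∫⁻ x', dX (x, x') ∂(κb q.2) ∂(κa q.1)
        = ∫⁻ _, ∫⁻ _, dY q ∂(κb q.2) ∂(κa q.1) := by
          refine lintegral_congr_ae ?_
          filter_upwards [hqa] with x hx
          refine lintegral_congr_ae ?_
          filter_upwards [hqb] with x' hx'
          rw [← hT_iso, hx, hx']
      _ = dY q := by simp
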